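/- Let f be a flow in G obtained by combining optimal flows f_C of the subproblems G_C (formed by contracting an arc between v_c and v_o in each component) together with flows on arcs between v_c and v_o set to u(e) if c(e)<0 and 0 otherwise. If each residual network (G_C)_{f_C} contains no negative-cost cycle, then the residual network G_f contains no negative-cost cycle. -/

import Mathlib

open Finset


/-- A flow network: directed arcs with costs, capacities (possibly infinite),
lower bounds and vertex balances. -/
structure Network (V E : Type) where
  src : E → V
  dst : E → V
  cost : E → ℝ
  cap : E → WithTop ℝ
  low : E → ℝ
  bal : V → ℝ

variable {V E : Type}

def outflow [Fintype E] [DecidableEq V] (N : Network V E) (f : E → ℝ) (v : V) : ℝ :=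
  ∑ e, if N.src e = v then f e else 0

def inflow [Fintype E] [DecidableEq V] (N : Network V E) (f : E → ℝ) (v : V) : ℝ :=
  ∑ e, if N.dst e = v then f e else 0

/-- `f` obeys lower bounds and capacities. -/
def RespectsCap (N : Network V E) (f : E → ℝ) : Prop :=
  ∀ e, N.low e ≤ f e ∧ (f e : WithTop ℝ) ≤ N.cap e

/-- Feasible flow: capacity constraints and balance constraints. -/
def Feasible [Fintype E] [DecidableEq V] (N : Network V E) (f : E → ℝ) : Prop :=
  RespectsCap N f ∧ ∀ v, outflow N f v - inflow N f v = N.bal v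

def flowCost [Fintype E] (N : Network V E) (f : E → ℝ) : ℝ := ∑ e, N.cost e * f e

/-- Excess of a vertex: `b(v) + inflow - outflow`. -/
def excess [Fintype E] [DecidableEq V] (N : Network V E) (f : E → ℝ) (v : V) : ℝ :=
  N.bal v + inflow N f v - outflow N f v

/-- Residual steps: `Sum.inl e` is the forward residual arc of `e`,
`Sum.inr e` the backward (reverse) residual arc. -/
def stepTail (N : Network V E) : E ⊕ E → V := Sum.elim N.src N.dst
def stepHead (N : Network V E) : E ⊕ E → V := Sum.elim N.dst N.src
def stepCost (N : Network V E) : E ⊕ E → ℝ := Sum.elim N.cost (fun e => -N.cost e)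

/-- A residual step is present in the residual network `G_f`. -/
def StepOk (N : Network V E) (f : E → ℝ) : E ⊕ E → Prop :=
  Sum.elim (fun e => (f e : WithTop ℝ) < N.cap e) (fun e => N.low e < f e)

def listCost (N : Network V E) (L : List (E ⊕ E)) : ℝ := (L.map (stepCost N)).sum

/-- A (closed) directed cycle in the residual network `G_f`. -/
def IsResidCycle (N : Network V E) (f : E → ℝ) (L : List (E ⊕ E)) : Prop :=
  L ≠ [] ∧ (∀ d ∈ L, StepOk N f d) ∧
  L.Chain' (fun a b => stepHead N a = stepTail N b) ∧
  L.getLast?.map (stepHead N) = L.head?.map (stepTail N)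

/-- The residual network contains no negative-cost cycle. -/
def NoNegCycle (N : Network V E) (f : E → ℝ) : Prop :=
  ∀ L, IsResidCycle N f L → 0 ≤ listCost N L

/-- A directed path from `s` to `t` in the residual network `G_f`. -/
def IsResidPath (N : Network V E) (f : E → ℝ) (s t : V) (L : List (E ⊕ E)) : Prop :=
  (∀ d ∈ L, StepOk N f d) ∧
  L.Chain' (fun a b => stepHead N a = stepTail N b) ∧
  L.head?.map (stepTail N) = some s ∧ L.getLast?.map (stepHead N) = some t

/-- Arcs between `v_o` and `v_c` (in either direction). -/
def ArcBtw (N : Network V E) (vo vc : V) (e : E) : Prop :=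
  (N.src e = vo ∧ N.dst e = vc) ∨ (N.src e = vc ∧ N.dst e = vo)

/-- Merge `v_c` into `v_o` (contraction of a connecting arc). -/
def mergeTo [DecidableEq V] (vo vc : V) (N : Network V E) : Network V E :=
  { N with
    src := fun e => if N.src e = vc then vo else N.src e,
    dst := fun e => if N.dst e = vc then vo else N.dst e }



section aux
variable {α W : Type*} (R : α → α → Prop) (p : α → Bool) (h t : α → W) (w : W)

lemma chain'_filter_aux
    (H3 : ∀ a b, R a b → p a = true → p b = true → h a = t b)
    (H1 : ∀ a b, R a b → p a = true → p b = false → h a = w)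
    (H2 : ∀ a b, R a b → p a = false → p b = true → t b = w) :
    ∀ M : List α, M.Chain' R → ∀ a, p a = true →
      (∀ x ∈ M.head?, (p x = true → h a = t x) ∧ (p x = false → h a = w)) →
      (a :: M.filter p).Chain' (fun a b => h a = t b) := by
  intro M
  induction M with
  | nil => intro _ a _ _; simp [List.Chain']
  | cons x M' ih =>
    intro hch a ha hlink
    unfold List.Chain' at hch; rw [List.isChain_cons] at hch
    obtain ⟨hx, hch'⟩ := hch
    have hl := hlink x (by simp)
    by_cases hpx : p x = true
    · unfold List.Chain'; rw [List.filter_cons_of_pos hpx, List.isChain_cons]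
      constructor
      · intro y hy
        simp only [List.head?_cons, Option.mem_def, Option.some.injEq] at hy
        subst hy
        exact hl.1 hpx
      · exact ih hch' x hpx (fun y hy => ⟨fun hpy => H3 x y (hx y hy) hpx hpy,
          fun hpy => H1 x y (hx y hy) hpx hpy⟩)
    · rw [List.filter_cons_of_neg hpx]
      exact ih hch' a ha (fun y hy =>
        ⟨fun hpy => by rw [hl.2 (by simpa using hpx), H2 x y (hx y hy) (by simpa using hpx) hpy],
         fun _ => hl.2 (by simpa using hpx)⟩)
end aux

section aux2
variable {α W : Type*} (R : α → α → Prop) (p : α → Bool) (h t : α → W) (w : W)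

lemma chain'_filter
    (H3 : ∀ a b, R a b → p a = true → p b = true → h a = t b)
    (H1 : ∀ a b, R a b → p a = true → p b = false → h a = w)
    (H2 : ∀ a b, R a b → p a = false → p b = true → t b = w) :
    ∀ M : List α, M.Chain' R → (M.filter p).Chain' (fun a b => h a = t b) := by
  intro M
  induction M with
  | nil => intro _; simp [List.Chain']
  | cons x M' ih =>
    intro hch
    unfold List.Chain' at hch; rw [List.isChain_cons] at hch
    obtain ⟨hx, hch'⟩ := hch
    by_cases hpx : p x = true
    · rw [List.filter_cons_of_pos hpx]
      exact chain'_filter_aux R p h t w H3 H1 H2 M' hch' x hpx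
        (fun y hy => ⟨fun hpy => H3 x y (hx y hy) hpx hpy,
          fun hpy => H1 x y (hx y hy) hpx hpy⟩)
    · rw [List.filter_cons_of_neg hpx]
      exact ih hch'
end aux2


lemma sum_filter_split {α : Type*} (p : α → Bool) (g : α → ℝ) (L : List α) :
    (L.map g).sum = ((L.filter p).map g).sum + ((L.filter (fun a => !p a)).map g).sum := by
  induction L with
  | nil => simp
  | cons x L ih =>
    by_cases hpx : p x = true
    · simp [List.filter_cons, hpx, ih]; ring
    · simp only [Bool.not_eq_true] at hpx
      simp [List.filter_cons, hpx, ih]; ring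

lemma peel {α ι : Type*} [DecidableEq ι] (g : α → ℝ) (tag : α → Option ι) :
    ∀ (I : List ι) (L : List α),
    (∀ d ∈ L, tag d = none → 0 ≤ g d) →
    (∀ d ∈ L, tag d = none ∨ ∃ i ∈ I, tag d = some i) →
    (∀ i : ι, 0 ≤ ((L.filter (fun d => decide (tag d = some i))).map g).sum) →
    0 ≤ (L.map g).sum := by
  intro I
  induction I with
  | nil =>
    intro L h0 hcov _
    apply List.sum_nonneg
    intro x hx
    simp only [List.mem_map] at hx
    obtain ⟨d, hd, rfl⟩ := hx
    exact h0 d hd ((hcov d hd).resolve_right (by simp))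
  | cons i0 I ih =>
    intro L h0 hcov hfil
    rw [sum_filter_split (fun d => decide (tag d = some i0)) g L]
    have h1 : 0 ≤ ((L.filter (fun d => decide (tag d = some i0))).map g).sum := hfil i0
    have h2 : 0 ≤ ((L.filter (fun d => !decide (tag d = some i0))).map g).sum := by
      apply ih
      · intro d hd; exact h0 d (List.mem_of_mem_filter hd)
      · intro d hd
        have hd' := List.mem_of_mem_filter hd
        have hne : ¬ tag d = some i0 := by
          have := List.of_mem_filter hd; simpa using this
        rcases hcov d hd' with h | ⟨j, hj, hjd⟩
        · exact Or.inl h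
        · refine Or.inr ⟨j, ?_, hjd⟩
          rcases List.mem_cons.mp hj with rfl | hj
          · exact absurd hjd hne
          · exact hj
      · intro i
        by_cases hii : i = i0
        · subst hii
          have he : (L.filter (fun d => !decide (tag d = some i))).filter
              (fun d => decide (tag d = some i)) = [] := by
            rw [List.filter_filter]
            apply List.filter_eq_nil_iff.mpr
            intro a _
            by_cases h : tag a = some i <;> simp [h]
          rw [he]; simp
        · have he : (L.filter (fun d => !decide (tag d = some i0))).filter
              (fun d => decide (tag d = some i)) =
              L.filter (fun d => decide (tag d = some i)) := by
            rw [List.filter_filter]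
            apply List.filter_congr
            intro a _
            by_cases h : tag a = some i
            · have : ¬ tag a = some i0 := by simp [h]; exact hii
              simp [h, this, hii]
            · simp [h]
          rw [he]; exact hfil i
    exact add_nonneg h1 h2

/-- Combining optimal flows of the subproblems `G_C` (with `v_c` merged into
`v_o`) with the greedy flow on arcs between `v_c` and `v_o` yields a flow
whose residual network has no negative-cost cycle. -/
theorem stmt8 {V E ι : Type} [Fintype V] [Fintype E] [DecidableEq V]
    (N : Network V E) (vo vc : V) (hvovc : vo ≠ vc)
    (hlow : ∀ e, 0 ≤ N.low e)
    (S : ι → Set V) (EC : ι → Set E) (fC : ι → E → ℝ) (f : E → ℝ)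
    -- the components do not contain `v_o` nor `v_c`, and are pairwise disjoint
    (hSvo : ∀ i, vo ∉ S i ∧ vc ∉ S i)
    (hSdisj : ∀ i j, i ≠ j → Disjoint (S i) (S j))
    -- every arc other than arcs between `v_o` and `v_c` is in exactly one `G_C`
    (hpart : ∀ e, ¬ ArcBtw N vo vc e → ∃! i, e ∈ EC i)
    (hBtwE : ∀ i, ∀ e ∈ EC i, ¬ ArcBtw N vo vc e)
    -- arcs of `G_C` have both endpoints in `C ∪ {v_o, v_c}`
    (hends : ∀ i, ∀ e ∈ EC i,
      (N.src e ∈ S i ∨ N.src e = vo ∨ N.src e = vc) ∧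
      (N.dst e ∈ S i ∨ N.dst e = vo ∨ N.dst e = vc))
    -- `f` agrees with `f_C` on the arcs of `G_C`
    (hagree : ∀ i, ∀ e ∈ EC i, f e = fC i e)
    -- on arcs between `v_o` and `v_c`: `f(e) = u(e)` if `c(e) < 0`, else `f(e) = 0`
    (hB : ∀ e, ArcBtw N vo vc e →
      (N.cost e < 0 → (f e : WithTop ℝ) = N.cap e) ∧ (0 ≤ N.cost e → f e = 0))
    -- each residual network `(G_C)_{f_C}` has no negative-cost cycle
    (hC : ∀ i, ∀ L : List (E ⊕ E), (∀ d ∈ L, Sum.elim id id d ∈ EC i) →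
      IsResidCycle (mergeTo vo vc N) (fC i) L → 0 ≤ listCost (mergeTo vo vc N) L) :
    NoNegCycle N f := by
  classical
  intro L hL
  obtain ⟨hLne, hOk, hchain, hwrap⟩ := hL
  set ed : E ⊕ E → E := Sum.elim id id with hed
  set φ : V → V := (fun v => if v = vc then vo else v) with hφ
  set tag : (E ⊕ E) → Option ι :=
    (fun d => if h : ∃ i, ed d ∈ EC i then some h.choose else none) with htag
  -- characterization of tags
  have tag_some : ∀ d i, tag d = some i ↔ ed d ∈ EC i := by
    intro d i
    constructor
    · intro h
      simp only [htag] at h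
      split at h
      · next hex =>
        have := hex.choose_spec
        rwa [Option.some_injective _ h] at this
      · exact absurd h (by simp)
    · intro h
      have hex : ∃ j, ed d ∈ EC j := ⟨i, h⟩
      simp only [htag, dif_pos hex, Option.some.injEq]
      have hnb : ¬ ArcBtw N vo vc (ed d) := hBtwE i _ h
      obtain ⟨j, _, huniq⟩ := hpart _ hnb
      rw [huniq _ hex.choose_spec, huniq _ h]
  have tag_none : ∀ d, tag d = none ↔ ArcBtw N vo vc (ed d) := by
    intro d
    constructor
    · intro h
      by_contra hnb
      obtain ⟨j, hj, _⟩ := hpart _ hnb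
      simp only [htag, dif_pos (⟨j, hj⟩ : ∃ k, ed d ∈ EC k)] at h
      exact absurd h (by simp)
    · intro h
      simp only [htag]
      rw [dif_neg]
      rintro ⟨j, hj⟩
      exact hBtwE j _ hj h
  -- endpoint facts
  have hep : ∀ (d : E ⊕ E) (i : ι), ed d ∈ EC i →
      (stepTail N d ∈ S i ∨ stepTail N d = vo ∨ stepTail N d = vc) ∧
      (stepHead N d ∈ S i ∨ stepHead N d = vo ∨ stepHead N d = vc) := by
    intro d i hd
    cases d with
    | inl e => exact ⟨(hends i e hd).1, (hends i e hd).2⟩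
    | inr e => exact ⟨(hends i e hd).2, (hends i e hd).1⟩
  have hother : ∀ (i : ι) (b : E ⊕ E), ¬ tag b = some i → ∀ v : V,
      (v = stepTail N b ∨ v = stepHead N b) → v ∉ S i := by
    intro i b hb v hv hvS
    rcases Option.eq_none_or_eq_some (tag b) with h0 | ⟨j, hj⟩
    · have hbb := (tag_none b).mp h0
      have : v = vo ∨ v = vc := by
        cases b with
        | inl e =>
          simp only [hed, Sum.elim_inl, id_eq] at hbb
          rcases hbb with ⟨h1, h2⟩ | ⟨h1, h2⟩ <;> rcases hv with rfl | rfl <;>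
            simp [stepTail, stepHead, h1, h2]
        | inr e =>
          simp only [hed, Sum.elim_inr, id_eq] at hbb
          rcases hbb with ⟨h1, h2⟩ | ⟨h1, h2⟩ <;> rcases hv with rfl | rfl <;>
            simp [stepTail, stepHead, h1, h2]
      rcases this with rfl | rfl
      · exact (hSvo i).1 hvS
      · exact (hSvo i).2 hvS
    · have hj' := (tag_some b j).mp hj
      have hji : j ≠ i := fun h => hb (h ▸ hj)
      have hB' := hep b j hj'
      have : v ∈ S j ∨ v = vo ∨ v = vc := by
        rcases hv with rfl | rfl
        · exact hB'.1
        · exact hB'.2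
      rcases this with h | rfl | rfl
      · exact (hSdisj j i hji).le_bot ⟨h, hvS⟩
      · exact (hSvo i).1 hvS
      · exact (hSvo i).2 hvS
  -- merged network facts
  have mhead : ∀ d, stepHead (mergeTo vo vc N) d = φ (stepHead N d) := by
    intro d; cases d <;> rfl
  have mtail : ∀ d, stepTail (mergeTo vo vc N) d = φ (stepTail N d) := by
    intro d; cases d <;> rfl
  have φvo : ∀ v : V, (v = vo ∨ v = vc) → φ v = vo := by
    rintro v (rfl | rfl)
    · rw [hφ]; simp [hvovc]
    · rw [hφ]; simp
  -- cost of between-steps is nonnegative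
  have hbtw_cost : ∀ d ∈ L, tag d = none → 0 ≤ stepCost N d := by
    intro d hd h0
    have hb := (tag_none d).mp h0
    have hok := hOk d hd
    cases d with
    | inl e =>
      simp only [stepCost, Sum.elim_inl]
      by_contra hneg
      push_neg at hneg
      have hcap := (hB e hb).1 hneg
      simp only [StepOk, Sum.elim_inl] at hok
      rw [hcap] at hok
      exact lt_irrefl _ hok
    | inr e =>
      simp only [stepCost, Sum.elim_inr, Left.nonneg_neg_iff]
      by_contra hpos
      push_neg at hpos
      have hf0 := (hB e hb).2 hpos.le
      simp only [StepOk, Sum.elim_inr] at hok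
      rw [hf0] at hok
      exact absurd hok (not_lt.mpr (hlow e))
  -- per-component cost is nonnegative
  have hcomp : ∀ i : ι,
      0 ≤ ((L.filter (fun d => decide (tag d = some i))).map (stepCost N)).sum := by
    intro i
    set Li := L.filter (fun d => decide (tag d = some i)) with hLi
    rcases eq_or_ne Li [] with hnil | hne
    · rw [hnil]; simp
    · have hmemLi : ∀ d ∈ Li, ed d ∈ EC i := by
        intro d hd
        exact (tag_some d i).mp (by simpa using List.of_mem_filter hd)
      have hcost_eq : ((Li.map (stepCost N)).sum : ℝ) = listCost (mergeTo vo vc N) Li := rfl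
      rw [hcost_eq]
      apply hC i Li (fun d hd => hmemLi d hd)
      -- relation facts for chain'_filter
      have HH3 : ∀ a b : E ⊕ E, stepHead N a = stepTail N b →
          decide (tag a = some i) = true → decide (tag b = some i) = true →
          stepHead (mergeTo vo vc N) a = stepTail (mergeTo vo vc N) b := by
        intro a b hab _ _
        rw [mhead, mtail, hab]
      have HH1 : ∀ a b : E ⊕ E, stepHead N a = stepTail N b →
          decide (tag a = some i) = true → decide (tag b = some i) = false →
          stepHead (mergeTo vo vc N) a = vo := by
        intro a b hab ha hb
        have ha' : ed a ∈ EC i := (tag_some a i).mp (by simpa using ha)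
        have hb' : ¬ tag b = some i := by simpa using hb
        rw [mhead]
        apply φvo
        rcases (hep a i ha').2 with h | h
        · exact absurd (hab ▸ h) (hother i b hb' _ (Or.inl rfl) ∘ (fun x => x))
        · exact h
      have HH2 : ∀ a b : E ⊕ E, stepHead N a = stepTail N b →
          decide (tag a = some i) = false → decide (tag b = some i) = true →
          stepTail (mergeTo vo vc N) b = vo := by
        intro a b hab ha hb
        have hb' : ed b ∈ EC i := (tag_some b i).mp (by simpa using hb)
        have ha' : ¬ tag a = some i := by simpa using ha
        rw [mtail]
        apply φvo
        rcases (hep b i hb').1 with h | h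
        · exact absurd h (hother i a ha' _ (Or.inr hab.symm))
        · exact h
      -- chain for L ++ L
      have hMchain : (L ++ L).Chain' (fun a b => stepHead N a = stepTail N b) := by
        apply List.isChain_append.mpr
        refine ⟨hchain, hchain, ?_⟩
        intro x hx y hy
        rw [hx, hy] at hwrap
        simpa using hwrap
      have hfchain := chain'_filter (fun a b => stepHead N a = stepTail N b)
        (fun d => decide (tag d = some i)) (stepHead (mergeTo vo vc N))
        (stepTail (mergeTo vo vc N)) vo HH3 HH1 HH2 (L ++ L) hMchain
      rw [List.filter_append, ← hLi] at hfchain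
      obtain ⟨hc1, _, hwrap'⟩ := List.isChain_append.mp hfchain
      obtain ⟨x, hx⟩ : ∃ x, Li.getLast? = some x := by
        cases h : Li.getLast? with
        | none => exact absurd (List.getLast?_eq_none_iff.mp h) hne
        | some x => exact ⟨x, rfl⟩
      obtain ⟨y, hy⟩ : ∃ y, Li.head? = some y := by
        cases h : Li.head? with
        | none => exact absurd (List.head?_eq_none_iff.mp h) hne
        | some y => exact ⟨y, rfl⟩
      refine ⟨hne, ?_, hc1, ?_⟩
      · -- StepOk
        intro d hd
        have hdL : d ∈ L := List.mem_of_mem_filter hd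
        have hok := hOk d hdL
        have he := hmemLi d hd
        cases d with
        | inl e =>
          simp only [StepOk, Sum.elim_inl, mergeTo] at hok ⊢
          rw [← hagree i e he]
          exact hok
        | inr e =>
          simp only [StepOk, Sum.elim_inr, mergeTo] at hok ⊢
          rw [← hagree i e he]
          exact hok
      · -- wrap
        rw [hx, hy, Option.map_some, Option.map_some, Option.some.injEq]
        exact hwrap' x hx y hy
  -- assemble
  show 0 ≤ listCost N L
  apply peel (stepCost N) tag (L.filterMap tag) L hbtw_cost ?_ hcomp
  intro d hd
  rcases Option.eq_none_or_eq_some (tag d) with h0 | ⟨j, hj⟩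
  · exact Or.inl h0
  · exact Or.inr ⟨j, List.mem_filterMap.mpr ⟨d, hd, hj⟩, hj⟩
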